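/- For every integer k ≥ 1 there exists an integer σ_0 ≥ 1 such that for all σ ≥ σ_0, for every and/or tree shape t of saturation level at least σ, and for all distinct points a, b ∈ {True,False}^k, the probability that the uniform random k-labelling t̂ of t satisfies f[t̂](a) = True and f[t̂](b) = False is at most 2/σ. -/

import Mathlib

/-- A plane rooted tree (shape of an and/or tree). -/
inductive PTree where
  | leaf : PTree
  | node : List PTree → PTree

/-- An and/or tree shape: every internal node has at least two children. -/
inductive IsShape : PTree → Prop
  | leaf : IsShape .leaf
  | node (cs : List PTree) : 2 ≤ cs.length → (∀ c ∈ cs, IsShape c) → IsShape (.node cs)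

/-- The size of a shape: its number of leaves. -/
def PTree.size : PTree → ℕ
  | .leaf => 1
  | .node cs => (cs.attach.map (fun ⟨c, _⟩ => c.size)).sum
decreasing_by
  have := List.sizeOf_lt_of_mem ‹c ∈ cs›; simp only [PTree.node.sizeOf_spec]; omega

/-- The saturation level of a shape: the minimal depth of a leaf. -/
def PTree.satLevel : PTree → ℕ
  | .leaf => 0
  | .node cs => ((cs.attach.map (fun ⟨c, _⟩ => c.satLevel)).min?.getD 0) + 1
decreasing_by
  have := List.sizeOf_lt_of_mem ‹c ∈ cs›; simp only [PTree.node.sizeOf_spec]; omega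

/-- A `k`-labelled and/or tree: internal nodes carry a connective
(`true` = ∧, `false` = ∨), leaves carry a literal: a variable index in `Fin k`
together with a polarity (`true` = positive, `false` = negated). -/
inductive LTree (k : ℕ) where
  | leaf : Fin k → Bool → LTree k
  | node : Bool → List (LTree k) → LTree k

/-- Evaluation of a labelled and/or tree, with the convention that a childless
internal node labelled ∧ (resp. ∨) evaluates to `false` (resp. `true`). -/
def LTree.eval {k : ℕ} : LTree k → (Fin k → Bool) → Bool
  | .leaf i pos, x => if pos then x i else !(x i)
  | .node c cs, x =>
    if cs.isEmpty then !c
    else if c then (cs.attach.map (fun ⟨t, _⟩ => t.eval x)).all (fun b => b)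
    else (cs.attach.map (fun ⟨t, _⟩ => t.eval x)).any (fun b => b)
decreasing_by
  all_goals (have := List.sizeOf_lt_of_mem ‹t ∈ cs›; simp only [LTree.node.sizeOf_spec]; omega)

/-- A valid labelled and/or tree: every internal node has at least two children. -/
inductive IsLShape {k : ℕ} : LTree k → Prop
  | leaf (i : Fin k) (pos : Bool) : IsLShape (.leaf i pos)
  | node (c : Bool) (cs : List (LTree k)) : 2 ≤ cs.length →
      (∀ t ∈ cs, IsLShape t) → IsLShape (.node c cs)

/-- The size of a labelled tree: its number of leaves. -/
def LTree.size {k : ℕ} : LTree k → ℕ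
  | .leaf _ _ => 1
  | .node _ cs => (cs.attach.map (fun ⟨t, _⟩ => t.size)).sum
decreasing_by
  have := List.sizeOf_lt_of_mem ‹t ∈ cs›; simp only [LTree.node.sizeOf_spec]; omega

/-- The list of leaf labels of a labelled tree. -/
def LTree.leaves {k : ℕ} : LTree k → List (Fin k × Bool)
  | .leaf i pos => [(i, pos)]
  | .node _ cs => (cs.attach.map (fun ⟨t, _⟩ => t.leaves)).flatten
decreasing_by
  have := List.sizeOf_lt_of_mem ‹t ∈ cs›; simp only [LTree.node.sizeOf_spec]; omega

/-- The list of all `k`-labellings of a given shape (each one equally likely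
under the uniform random labelling). -/
def labellings (k : ℕ) : PTree → List (LTree k)
  | .leaf => (List.finRange k).flatMap (fun i => [LTree.leaf i true, LTree.leaf i false])
  | .node cs => [true, false].flatMap (fun c =>
      ((cs.attach.map (fun ⟨t, _⟩ => labellings k t)).sections).map (fun l => LTree.node c l))
decreasing_by
  have := List.sizeOf_lt_of_mem ‹t ∈ cs›; simp only [PTree.node.sizeOf_spec]; omega

open Classical in
/-- The probability that the uniform random `k`-labelling of the shape `t`
computes a Boolean function belonging to the set `s`. -/
noncomputable def Pr (k : ℕ) (t : PTree) (s : Set ((Fin k → Bool) → Bool)) : ℝ :=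
  (((labellings k t).filter (fun τ => decide (τ.eval ∈ s))).length : ℝ)
    / ((labellings k t).length : ℝ)

/-- `Pfun k t g` = `P_k[t](g)`: the probability that the uniform random
`k`-labelling of the shape `t` computes exactly the Boolean function `g`. -/
noncomputable def Pfun (k : ℕ) (t : PTree) (g : (Fin k → Bool) → Bool) : ℝ :=
  Pr k t {g}

/-- `x_i` is an essential variable of `f`. -/
def Essential {k : ℕ} (f : (Fin k → Bool) → Bool) (i : Fin k) : Prop :=
  ∃ x : Fin k → Bool, f (Function.update x i true) ≠ f (Function.update x i false)

open Classical in
/-- The number of essential variables of `f`. -/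
noncomputable def essCount {k : ℕ} (f : (Fin k → Bool) → Bool) : ℕ :=
  (Finset.univ.filter (fun i => Essential f i)).card

open Classical in
/-- The complexity `L(f)`: the minimal number of leaves of a valid `k`-labelled
and/or tree computing `f`, with the convention `L(True) = L(False) = 0`. -/
noncomputable def complexity (k : ℕ) (f : (Fin k → Bool) → Bool) : ℕ :=
  if f = (fun _ => true) ∨ f = (fun _ => false) then 0
  else sInf {n | ∃ τ : LTree k, IsLShape τ ∧ τ.eval = f ∧ τ.size = n}


lemma nat_min_le (l : List ℕ) : ∀ b ∈ l, l.min?.getD 0 ≤ b := by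
  induction l with
  | nil => simp
  | cons x xs ih =>
    intro b hb
    have hc : (x :: xs).min? = some (xs.min?.elim x (min x)) := List.min?_cons
    rw [hc]
    rcases List.mem_cons.1 hb with rfl | hb
    · cases h : xs.min? <;> simp [h]
    · have := ih b hb
      cases h : xs.min? with
      | none => simp [h] at this ⊢; cases xs <;> simp_all
      | some m =>
        rw [h] at this; simp [h] at this ⊢
        exact Or.inr this

section Lists
variable {α β : Type*}

lemma length_filter_flatMap (l : List β) (f : β → List α) (q : α → Bool) :
    ((l.flatMap f).filter q).length = (l.map (fun i => ((f i).filter q).length)).sum := by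
  induction l with
  | nil => simp
  | cons x xs ih => simp [List.flatMap_cons, List.filter_append, ih]

lemma length_filter_split (l : List α) (p q : α → Bool) :
    (l.filter p).length
      = (l.filter (fun x => p x && q x)).length + (l.filter (fun x => p x && !q x)).length := by
  induction l with
  | nil => simp
  | cons x xs ih =>
    by_cases hp : p x <;> by_cases hq : q x <;>
      simp [List.filter_cons, hp, hq, ih] <;> omega

lemma length_filter_not (l : List α) (p : α → Bool) :
    (l.filter (fun x => !p x)).length + (l.filter p).length = l.length := by
  induction l with
  | nil => simp
  | cons x xs ih => by_cases hp : p x <;> simp [List.filter_cons, hp] <;> omega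

lemma sum_ite_count (l : List β) (p : β → Bool) (c : ℕ) :
    (l.map (fun s => if p s then c else 0)).sum = (l.filter p).length * c := by
  induction l with
  | nil => simp
  | cons x xs ih => by_cases h : p x <;> simp [h, ih, List.filter_cons] <;> ring

lemma all_and (l : List α) (p q : α → Bool) :
    (l.all p && l.all q) = l.all (fun x => p x && q x) := by
  induction l with
  | nil => simp
  | cons x xs ih => simp only [List.all_cons, ← ih]; cases p x <;> cases q x <;> simp

lemma any_eq_not_all (l : List α) (p : α → Bool) :
    l.any p = !(l.all fun x => !p x) := by
  induction l with
  | nil => simp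
  | cons x xs ih => simp [ih]

lemma sec_count (Ls : List (List α)) (q : α → Bool) :
    ((Ls.sections).filter (fun l => l.all q)).length
      = (Ls.map (fun L => (L.filter q).length)).prod := by
  induction Ls with
  | nil => rfl
  | cons L Ls ih =>
    simp only [List.sections]
    rw [length_filter_flatMap]
    have h : ∀ s ∈ Ls.sections,
        ((L.map (fun a => a :: s)).filter (fun l => l.all q)).length
          = (if s.all q then (L.filter q).length else 0) := by
      intro s _
      rw [List.filter_map, List.length_map]
      by_cases h : s.all q
      · simp [Function.comp_def, List.all_cons, h, Bool.and_true]
      · simp only [Function.comp_def, List.all_cons, Bool.eq_false_iff.2 h, Bool.and_false]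
        simp
    rw [List.map_congr_left h, sum_ite_count, ih]
    simp [Nat.mul_comm]

lemma length_sections (Ls : List (List α)) :
    Ls.sections.length = (Ls.map List.length).prod := by
  have := sec_count Ls (fun _ => true)
  have h2 : (fun (l : List α) => l.all (fun _ => true)) = fun _ => true := by
    funext l; simp
  rw [h2, List.filter_true] at this
  simpa using this

lemma list_prod_le {l : List α} {f g : α → ℝ} (h : ∀ x ∈ l, 0 ≤ f x ∧ f x ≤ g x) :
    (l.map f).prod ≤ (l.map g).prod := by
  induction l with
  | nil => simp
  | cons x xs ih =>
    simp only [List.map_cons, List.prod_cons]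
    have h1 := h x (by simp)
    have h2 : ∀ y ∈ xs, 0 ≤ f y ∧ f y ≤ g y := fun y hy => h y (by simp [hy])
    have hf : (0:ℝ) ≤ (xs.map f).prod := by
      apply List.prod_nonneg; intro a ha
      obtain ⟨y, hy, rfl⟩ := List.mem_map.1 ha
      exact (h2 y hy).1
    have := ih h2
    nlinarith [h1.1, h1.2]

lemma list_prod_nonneg {l : List α} {f : α → ℝ} (h : ∀ x ∈ l, 0 ≤ f x) :
    0 ≤ (l.map f).prod := by
  apply List.prod_nonneg; intro a ha
  obtain ⟨y, hy, rfl⟩ := List.mem_map.1 ha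
  exact h y hy

lemma prod_map_mul_const (l : List α) (s : ℝ) (f : α → ℝ) :
    (l.map (fun x => s * f x)).prod = s ^ l.length * (l.map f).prod := by
  induction l with
  | nil => simp
  | cons x xs ih => simp [ih, pow_succ]; ring

end Lists

section Trees
variable {k : ℕ}

lemma labellings_leaf (k : ℕ) :
    labellings k .leaf
      = (List.finRange k).flatMap (fun i => [LTree.leaf i true, LTree.leaf i false]) := by
  rw [labellings]

lemma labellings_node (k : ℕ) (cs : List PTree) :
    labellings k (.node cs)
      = ((cs.map (labellings k)).sections.map (fun l => LTree.node true l))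
        ++ ((cs.map (labellings k)).sections.map (fun l => LTree.node false l)) := by
  rw [labellings]
  simp [List.flatMap_cons, List.flatMap_nil, List.attach_map_val]

lemma all_map_id {α} (l : List α) (f : α → Bool) :
    (l.map f).all (fun b => b) = l.all f := by
  induction l <;> simp_all

lemma any_map_id {α} (l : List α) (f : α → Bool) :
    (l.map f).any (fun b => b) = l.any f := by
  induction l <;> simp_all

lemma all_map' {α β} (l : List α) (f : α → β) (p : β → Bool) :
    (l.map f).all p = l.all (fun a => p (f a)) := by
  induction l <;> simp_all

lemma any_map' {α β} (l : List α) (f : α → β) (p : β → Bool) :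
    (l.map f).any p = l.any (fun a => p (f a)) := by
  induction l <;> simp_all

lemma attach_all {α} (l : List α) (f : α → Bool) :
    l.attach.all (fun x => f x.1) = l.all f := by
  conv_rhs => rw [← List.attach_map_subtype_val l]
  rw [all_map']

lemma attach_any {α} (l : List α) (f : α → Bool) :
    l.attach.any (fun x => f x.1) = l.any f := by
  conv_rhs => rw [← List.attach_map_subtype_val l]
  rw [any_map']

lemma eval_leaf (i : Fin k) (pos : Bool) (x : Fin k → Bool) :
    (LTree.leaf i pos).eval x = if pos then x i else !(x i) := by
  rw [LTree.eval]

lemma eval_node (c : Bool) (l : List (LTree k)) (hl : l ≠ []) (x : Fin k → Bool) :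
    (LTree.node c l).eval x = if c then l.all (fun τ => τ.eval x) else l.any (fun τ => τ.eval x) := by
  rw [LTree.eval]
  have he : l.isEmpty = false := by simp [List.isEmpty_iff, hl]
  cases c
  · simp only [he, Bool.false_eq_true, if_false]
    rw [any_map_id, attach_any l (fun τ => τ.eval x)]
  · simp only [he, Bool.false_eq_true, if_false, if_true]
    rw [all_map_id, attach_all l (fun τ => τ.eval x)]


lemma satLevel_node (cs : List PTree) :
    (PTree.node cs).satLevel = (cs.map PTree.satLevel).min?.getD 0 + 1 := by
  rw [PTree.satLevel]
  simp [List.attach_map_val]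

end Trees

def cnt (k : ℕ) (q : LTree k → Bool) (t : PTree) : ℕ :=
  ((labellings k t).filter q).length

def len (k : ℕ) (t : PTree) : ℕ := (labellings k t).length

lemma cnt_node (k : ℕ) (cs : List PTree) (q : LTree k → Bool) :
    cnt k q (.node cs)
      = ((cs.map (labellings k)).sections.filter (fun l => q (.node true l))).length
        + ((cs.map (labellings k)).sections.filter (fun l => q (.node false l))).length := by
  unfold cnt
  rw [labellings_node, List.filter_append, List.length_append,
    List.filter_map, List.filter_map, List.length_map, List.length_map]
  rfl

lemma len_node (k : ℕ) (cs : List PTree) :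
    len k (.node cs) = 2 * (cs.map (len k)).prod := by
  unfold len
  rw [labellings_node, List.length_append, List.length_map, List.length_map,
    length_sections, List.map_map]
  have h1 : (List.length ∘ labellings k) = len k := rfl
  have h2 : (fun t => (labellings k t).length) = len k := rfl
  rw [h1, h2]
  omega

lemma sec_cnt (k : ℕ) (cs : List PTree) (r : LTree k → Bool) :
    ((cs.map (labellings k)).sections.filter (fun l => l.all r)).length
      = (cs.map (cnt k r)).prod := by
  rw [sec_count, List.map_map]
  rfl

lemma cnt_split (k : ℕ) (t : PTree) (p q : LTree k → Bool) :
    cnt k p t = cnt k (fun τ => p τ && q τ) t + cnt k (fun τ => p τ && !q τ) t :=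
  length_filter_split _ _ _

lemma cnt_not (k : ℕ) (t : PTree) (p : LTree k → Bool) :
    cnt k (fun τ => !p τ) t + cnt k p t = len k t :=
  length_filter_not _ _

lemma pow_bound (s : ℝ) (h0 : 0 ≤ s) (h1 : s ≤ 1) : ∀ j : ℕ, 1 - s^(j+2) ≤ 2^j * (1 - s^2) := by
  intro j
  induction j with
  | zero => norm_num
  | succ j ih =>
    have hs : s^(j+2) ≤ s := by
      have := pow_le_pow_of_le_one h0 h1 (show 1 ≤ j+2 by omega)
      simpa using this
    have h2 : s^(j+3) = s^(j+2) * s := by ring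
    have key : 1 - s^(j+3) ≤ 2*(1 - s^(j+2)) := by
      nlinarith [mul_nonneg (sub_nonneg.2 hs) (show (0:ℝ) ≤ 2 - s by linarith),
        sq_nonneg (1-s)]
    have hp : (2:ℝ)^(j+1) = 2*2^j := by ring
    have : 1 - s^(j+3) ≤ 2^(j+1)*(1-s^2) := by rw [hp]; linarith
    simpa [show j+1+2 = j+3 from rfl] using this
lemma sec_len (k : ℕ) (cs : List PTree) :
    (cs.map (labellings k)).sections.length = (cs.map (len k)).prod := by
  rw [length_sections, List.map_map]
  have h1 : (List.length ∘ labellings k) = len k := rfl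
  rw [h1]

lemma cast_prod (cs : List PTree) (f : PTree → ℕ) :
    (((cs.map f).prod : ℕ) : ℝ) = (cs.map (fun c => (f c : ℝ))).prod := by
  rw [Nat.cast_list_prod, List.map_map]
  rfl

lemma main_ind (k : ℕ) (hk : 1 ≤ k) (a b : Fin k → Bool) :
    ∀ n (t : PTree), sizeOf t ≤ n → IsShape t →
      0 < len k t ∧
      (∀ x : Fin k → Bool, 2 * cnt k (fun τ => τ.eval x) t = len k t) ∧
      ((cnt k (fun τ => τ.eval a && !τ.eval b) t : ℝ) * ((t.satLevel : ℝ) + 2)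
        ≤ (len k t : ℝ)) := by
  intro n
  induction n with
  | zero =>
    intro t ht
    exfalso
    cases t <;> simp at ht
  | succ n ih =>
    intro t ht hshape
    cases hshape with
    | leaf =>
      have hlen : len k .leaf = 2 * k := by
        unfold len
        rw [labellings_leaf, List.length_flatMap]
        simp [Function.comp_def, List.map_const', List.sum_replicate, mul_comm]
      have hdual : ∀ x : Fin k → Bool,
          cnt k (fun τ => τ.eval x) .leaf = k := by
        intro x
        unfold cnt
        rw [labellings_leaf, length_filter_flatMap]
        have h : ∀ i ∈ List.finRange k,
            (([LTree.leaf i true, LTree.leaf i false]).filter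
              (fun τ => τ.eval x)).length = 1 := by
          intro i _
          cases hxi : x i <;> simp [List.filter_cons, eval_leaf, hxi]
        rw [List.map_congr_left h]
        simp [List.map_const', List.sum_replicate]
      have hbnd : cnt k (fun τ => τ.eval a && !τ.eval b) .leaf ≤ k := by
        unfold cnt
        rw [labellings_leaf, length_filter_flatMap]
        have h : ∀ i ∈ List.finRange k,
            (([LTree.leaf i true, LTree.leaf i false]).filter
              (fun τ => τ.eval a && !τ.eval b)).length ≤ 1 := by
          intro i _
          cases ha : a i <;> cases hb2 : b i <;>
            simp [List.filter_cons, eval_leaf, ha, hb2]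
        calc ((List.finRange k).map (fun i =>
                (([LTree.leaf i true, LTree.leaf i false]).filter
                  (fun τ => τ.eval a && !τ.eval b)).length)).sum
            ≤ ((List.finRange k).map (fun _ => 1)).sum := List.sum_le_sum h
          _ = k := by simp [List.map_const', List.sum_replicate]
      refine ⟨by omega, fun x => by rw [hdual x, hlen], ?_⟩
      have hsat : (PTree.leaf).satLevel = 0 := by rw [PTree.satLevel]
      rw [hsat, hlen]
      push_cast
      have : (cnt k (fun τ => τ.eval a && !τ.eval b) .leaf : ℝ) ≤ (k : ℝ) := by
        exact_mod_cast hbnd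
      linarith
    | node cs h2 hcs =>
      -- children IH
      have IH : ∀ c ∈ cs,
          0 < len k c ∧
          (∀ x : Fin k → Bool, 2 * cnt k (fun τ => τ.eval x) c = len k c) ∧
          ((cnt k (fun τ => τ.eval a && !τ.eval b) c : ℝ) * ((c.satLevel : ℝ) + 2)
            ≤ (len k c : ℝ)) := by
        intro c hc
        apply ih c ?_ (hcs c hc)
        have h1 := List.sizeOf_lt_of_mem hc
        simp only [PTree.node.sizeOf_spec] at ht
        omega
      have hsec_ne : ∀ l ∈ (cs.map (labellings k)).sections, l ≠ [] := by
        intro l hl hnil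
        have hlen := List.mem_sections_length hl
        rw [List.length_map, hnil] at hlen
        simp at hlen
        omega
      have Etrue : ∀ (x : Fin k → Bool), ∀ l ∈ (cs.map (labellings k)).sections,
          (LTree.node true l).eval x = l.all (fun τ => τ.eval x) := by
        intro x l hl
        rw [eval_node _ _ (hsec_ne l hl), if_pos rfl]
      have Efalse : ∀ (x : Fin k → Bool), ∀ l ∈ (cs.map (labellings k)).sections,
          (LTree.node false l).eval x = !(l.all (fun τ => !τ.eval x)) := by
        intro x l hl
        rw [eval_node _ _ (hsec_ne l hl), if_neg (by simp), any_eq_not_all]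
      -- (i) positivity
      have hpos : 0 < len k (.node cs) := by
        rw [len_node]
        have : 0 < (cs.map (len k)).prod := by
          apply List.prod_pos
          intro x hx
          obtain ⟨c, hc, rfl⟩ := List.mem_map.1 hx
          exact (IH c hc).1
        omega
      -- (ii) duality
      have hdual : ∀ x : Fin k → Bool,
          2 * cnt k (fun τ => τ.eval x) (.node cs) = len k (.node cs) := by
        intro x
        rw [cnt_node, len_node]
        have e1 : ((cs.map (labellings k)).sections.filter
              (fun l => (LTree.node true l).eval x)).length
            = (cs.map (cnt k (fun τ => τ.eval x))).prod := by
          rw [List.filter_congr (fun l hl => Etrue x l hl), sec_cnt]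
        have e2 : ((cs.map (labellings k)).sections.filter
              (fun l => (LTree.node false l).eval x)).length
            + ((cs.map (labellings k)).sections.filter
              (fun l => l.all (fun τ => !τ.eval x))).length
            = (cs.map (labellings k)).sections.length := by
          rw [List.filter_congr (fun l hl => Efalse x l hl)]
          exact length_filter_not _ _
        have e3 : ((cs.map (labellings k)).sections.filter
              (fun l => l.all (fun τ => !τ.eval x))).length
            = (cs.map (cnt k (fun τ => !τ.eval x))).prod := sec_cnt k cs _
        have e4 : cs.map (cnt k (fun τ => !τ.eval x)) = cs.map (cnt k (fun τ => τ.eval x)) := by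
          apply List.map_congr_left
          intro c hc
          have hn := cnt_not k c (fun τ => τ.eval x)
          have hd := (IH c hc).2.1 x
          omega
        have e5 := sec_len k cs
        rw [e4] at e3
        omega
      refine ⟨hpos, hdual, ?_⟩
      -- child-level counting relations
      have hQP : ∀ c ∈ cs,
          cnt k (fun τ => τ.eval a) c
            = cnt k (fun τ => τ.eval a && τ.eval b) c
              + cnt k (fun τ => τ.eval a && !τ.eval b) c :=
        fun c _ => cnt_split k c _ _
      have hNB : ∀ c ∈ cs,
          cnt k (fun τ => !τ.eval b) c = cnt k (fun τ => τ.eval a) c := by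
        intro c hc
        have h1 := cnt_not k c (fun τ => τ.eval b)
        have hb2 := (IH c hc).2.1 b
        have ha2 := (IH c hc).2.1 a
        omega
      have hPcomm : ∀ c ∈ cs,
          cnt k (fun τ => !τ.eval b && !(!τ.eval a)) c
            = cnt k (fun τ => τ.eval a && !τ.eval b) c := by
        intro c _
        unfold cnt
        congr 1
        apply List.filter_congr
        intro τ _
        cases τ.eval a <;> cases τ.eval b <;> rfl
      have hZ : ∀ c ∈ cs,
          cnt k (fun τ => !τ.eval b && !τ.eval a) c
            = cnt k (fun τ => τ.eval a && τ.eval b) c := by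
        intro c hc
        have h1 := cnt_split k c (fun τ => !τ.eval b) (fun τ => !τ.eval a)
        have h2 := hPcomm c hc
        have h3 := hNB c hc
        have h4 := hQP c hc
        omega
      -- node-level split: true branch
      have hT : (cs.map (cnt k (fun τ => τ.eval a))).prod
          = (cs.map (cnt k (fun τ => τ.eval a && τ.eval b))).prod
            + ((cs.map (labellings k)).sections.filter
                (fun l => (LTree.node true l).eval a && !(LTree.node true l).eval b)).length := by
        have hs := length_filter_split ((cs.map (labellings k)).sections)
          (fun l => l.all (fun τ => τ.eval a)) (fun l => l.all (fun τ => τ.eval b))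
        rw [sec_cnt] at hs
        rw [List.filter_congr
          (fun l (_ : l ∈ (cs.map (labellings k)).sections) =>
            all_and l (fun τ => τ.eval a) (fun τ => τ.eval b)), sec_cnt] at hs
        rw [show (((cs.map (labellings k)).sections).filter
              (fun l => l.all (fun τ => τ.eval a) && !(l.all (fun τ => τ.eval b)))).length
            = (((cs.map (labellings k)).sections).filter
              (fun l => (LTree.node true l).eval a && !(LTree.node true l).eval b)).length from by
          congr 1
          apply List.filter_congr
          intro l hl
          rw [Etrue a l hl, Etrue b l hl]] at hs
        exact hs
      -- node-level split: false branch
      have hF : (cs.map (cnt k (fun τ => !τ.eval b))).prod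
          = (cs.map (cnt k (fun τ => !τ.eval b && !τ.eval a))).prod
            + ((cs.map (labellings k)).sections.filter
                (fun l => (LTree.node false l).eval a && !(LTree.node false l).eval b)).length := by
        have hs := length_filter_split ((cs.map (labellings k)).sections)
          (fun l => l.all (fun τ => !τ.eval b)) (fun l => l.all (fun τ => !τ.eval a))
        rw [sec_cnt] at hs
        rw [List.filter_congr
          (fun l (_ : l ∈ (cs.map (labellings k)).sections) =>
            all_and l (fun τ => !τ.eval b) (fun τ => !τ.eval a)), sec_cnt] at hs
        rw [show (((cs.map (labellings k)).sections).filter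
              (fun l => l.all (fun τ => !τ.eval b) && !(l.all (fun τ => !τ.eval a)))).length
            = (((cs.map (labellings k)).sections).filter
              (fun l => (LTree.node false l).eval a && !(LTree.node false l).eval b)).length from by
          congr 1
          apply List.filter_congr
          intro l hl
          rw [Efalse a l hl, Efalse b l hl]
          cases l.all (fun τ => !τ.eval a) <;> cases l.all (fun τ => !τ.eval b) <;> rfl] at hs
        exact hs
      have hmapNB : cs.map (cnt k (fun τ => !τ.eval b)) = cs.map (cnt k (fun τ => τ.eval a)) :=
        List.map_congr_left hNB
      have hmapZ : cs.map (cnt k (fun τ => !τ.eval b && !τ.eval a))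
          = cs.map (cnt k (fun τ => τ.eval a && τ.eval b)) := List.map_congr_left hZ
      rw [hmapNB, hmapZ] at hF
      have hcnt10 : cnt k (fun τ => τ.eval a && !τ.eval b) (.node cs)
            + 2 * (cs.map (cnt k (fun τ => τ.eval a && τ.eval b))).prod
          = 2 * (cs.map (cnt k (fun τ => τ.eval a))).prod := by
        simp only [cnt_node]
        omega
      -- real-number part
      have hdle : ∀ c ∈ cs, (cs.map PTree.satLevel).min?.getD 0 ≤ c.satLevel := fun c hc =>
        nat_min_le _ _ (List.mem_map_of_mem hc)
      set d0 := (cs.map PTree.satLevel).min?.getD 0 with hd0def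
      set D : ℝ := (d0 : ℝ) with hDdef
      have hD0 : 0 ≤ D := Nat.cast_nonneg _
      set s : ℝ := D / (D + 2) with hsdef
      have hs0 : 0 ≤ s := by positivity
      have hs1 : s ≤ 1 := by
        rw [hsdef, div_le_one (by linarith)]
        linarith
      have hchild : ∀ c ∈ cs,
          0 ≤ s * (cnt k (fun τ => τ.eval a) c : ℝ) ∧
          s * (cnt k (fun τ => τ.eval a) c : ℝ)
            ≤ (cnt k (fun τ => τ.eval a && τ.eval b) c : ℝ) := by
        intro c hc
        have hq := hQP c hc
        have hlen2 := (IH c hc).2.1 a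
        have hr := (IH c hc).2.2
        have hsl := hdle c hc
        refine ⟨by positivity, ?_⟩
        rw [hsdef, div_mul_eq_mul_div, div_le_iff₀ (by linarith)]
        have h1 : (cnt k (fun τ => τ.eval a && !τ.eval b) c : ℝ) * (D + 2)
            ≤ (cnt k (fun τ => τ.eval a && !τ.eval b) c : ℝ) * ((c.satLevel : ℝ) + 2) := by
          apply mul_le_mul_of_nonneg_left ?_ (Nat.cast_nonneg _)
          have : (d0 : ℝ) ≤ (c.satLevel : ℝ) := by exact_mod_cast hsl
          rw [hDdef]
          linarith
        have h2 : (cnt k (fun τ => τ.eval a) c : ℝ)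
            = (cnt k (fun τ => τ.eval a && τ.eval b) c : ℝ)
              + (cnt k (fun τ => τ.eval a && !τ.eval b) c : ℝ) := by
          exact_mod_cast congrArg (fun z : ℕ => (z : ℝ)) hq
        have h3 : (len k c : ℝ) = 2 * (cnt k (fun τ => τ.eval a) c : ℝ) := by
          exact_mod_cast (congrArg (fun z : ℕ => (z : ℝ)) hlen2).symm
        nlinarith [hr, h1]
      set m := cs.length with hmdef
      have hprodQ : s ^ m * (cs.map (fun c => (cnt k (fun τ => τ.eval a) c : ℝ))).prod
          ≤ (cs.map (fun c => (cnt k (fun τ => τ.eval a && τ.eval b) c : ℝ))).prod := by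
        have h := list_prod_le (l := cs)
          (f := fun c => s * (cnt k (fun τ => τ.eval a) c : ℝ))
          (g := fun c => (cnt k (fun τ => τ.eval a && τ.eval b) c : ℝ))
          (fun c hc => hchild c hc)
        rwa [prod_map_mul_const] at h
      have hPA0 : 0 ≤ (cs.map (fun c => (cnt k (fun τ => τ.eval a) c : ℝ))).prod :=
        list_prod_nonneg (fun c _ => Nat.cast_nonneg _)
      have hcastid : (cnt k (fun τ => τ.eval a && !τ.eval b) (.node cs) : ℝ)
            + 2 * (cs.map (fun c => (cnt k (fun τ => τ.eval a && τ.eval b) c : ℝ))).prod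
          = 2 * (cs.map (fun c => (cnt k (fun τ => τ.eval a) c : ℝ))).prod := by
        have h := congrArg (fun z : ℕ => (z : ℝ)) hcnt10
        push_cast at h
        rw [List.map_map, List.map_map] at h
        exact h
      have hlenR : (len k (.node cs) : ℝ)
          = 2 * (2 ^ m * (cs.map (fun c => (cnt k (fun τ => τ.eval a) c : ℝ))).prod) := by
        rw [len_node, Nat.cast_mul, Nat.cast_ofNat, cast_prod]
        rw [List.map_congr_left (f := fun c => (len k c : ℝ))
          (g := fun c => 2 * (cnt k (fun τ => τ.eval a) c : ℝ))
          (fun c hc => by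
            show ((len k c : ℕ) : ℝ) = 2 * ((cnt k (fun τ => τ.eval a) c : ℕ) : ℝ)
            exact_mod_cast ((IH c hc).2.1 a).symm)]
        rw [prod_map_mul_const]
      have hm2 : m - 2 + 2 = m := by omega
      have hpow : 1 - s ^ m ≤ 2 ^ (m - 2) * (1 - s ^ 2) := by
        have h := pow_bound s hs0 hs1 (m - 2)
        rwa [hm2] at h
      have hsD : (1 - s ^ 2) * (D + 3) ≤ 4 := by
        have h1 : (1 - s ^ 2) = (4 * D + 4) / ((D + 2) ^ 2) := by
          rw [hsdef]
          field_simp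
          ring
        rw [h1, div_mul_eq_mul_div, div_le_iff₀ (by positivity)]
        nlinarith
      set PA := (cs.map (fun c => (cnt k (fun τ => τ.eval a) c : ℝ))).prod with hPAdef
      set PQ := (cs.map (fun c => (cnt k (fun τ => τ.eval a && τ.eval b) c : ℝ))).prod with hPQdef
      set N := (cnt k (fun τ => τ.eval a && !τ.eval b) (PTree.node cs) : ℝ) with hNdef
      have hD3 : (0 : ℝ) ≤ D + 3 := by linarith
      have c1 : N ≤ 2 * PA - 2 * (s ^ m * PA) := by linarith [hprodQ]
      have c2 : N * (D + 3) ≤ (2 * PA - 2 * (s ^ m * PA)) * (D + 3) :=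
        mul_le_mul_of_nonneg_right c1 hD3
      have c3 : (2 * PA - 2 * (s ^ m * PA)) * (D + 3) = 2 * PA * ((1 - s ^ m) * (D + 3)) := by
        ring
      have c4 : (1 - s ^ m) * (D + 3) ≤ (2 ^ (m - 2) * (1 - s ^ 2)) * (D + 3) :=
        mul_le_mul_of_nonneg_right hpow hD3
      have c6 : (2 : ℝ) ^ (m - 2) * ((1 - s ^ 2) * (D + 3)) ≤ 2 ^ (m - 2) * 4 :=
        mul_le_mul_of_nonneg_left hsD (by positivity)
      have c7 : (1 - s ^ m) * (D + 3) ≤ 2 ^ (m - 2) * 4 := by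
        refine le_trans c4 ?_
        calc (2 ^ (m - 2) * (1 - s ^ 2)) * (D + 3)
            = 2 ^ (m - 2) * ((1 - s ^ 2) * (D + 3)) := by ring
          _ ≤ 2 ^ (m - 2) * 4 := c6
      have c8 : 2 * PA * ((1 - s ^ m) * (D + 3)) ≤ 2 * PA * (2 ^ (m - 2) * 4) :=
        mul_le_mul_of_nonneg_left c7 (by linarith)
      have c9 : (2 : ℝ) ^ (m - 2) * 4 = 2 ^ m := by
        rw [← hm2, pow_add]
        norm_num
      have c10 : 2 * PA * ((2 : ℝ) ^ (m - 2) * 4) = 2 * (2 ^ m * PA) := by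
        rw [c9]
        ring
      have hsatR : (((PTree.node cs).satLevel : ℕ) : ℝ) + 2 = D + 3 := by
        rw [satLevel_node]
        push_cast
        rw [hDdef]
        ring
      rw [hsatR, hlenR]
      linarith [c2, c3, c8, c10]
/-- For every `k ≥ 1` there is `σ₀ ≥ 1` such that for every
`σ ≥ σ₀`, every shape of saturation level at least `σ`, and all distinct
`a b : {True,False}^k`, the probability that the random labelling evaluates
to `True` at `a` and to `False` at `b` is at most `2/σ`. -/
theorem andor_two_point_bound (k : ℕ) (hk : 1 ≤ k) :
    ∃ σ₀ : ℕ, 1 ≤ σ₀ ∧ ∀ σ : ℕ, σ₀ ≤ σ → ∀ t : PTree, IsShape t →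
      σ ≤ t.satLevel → ∀ a b : Fin k → Bool, a ≠ b →
        Pr k t {g | g a = true ∧ g b = false} ≤ 2 / (σ : ℝ) := by
  refine ⟨1, le_refl 1, ?_⟩
  intro σ hσ t hshape hsat a b hab
  obtain ⟨hpos, -, hbound⟩ := main_ind k hk a b (sizeOf t) t le_rfl hshape
  have hPr : Pr k t {g | g a = true ∧ g b = false}
      = (cnt k (fun τ => τ.eval a && !τ.eval b) t : ℝ) / (len k t : ℝ) := by
    unfold Pr cnt len
    congr 3
    apply List.filter_congr
    intro τ _
    cases hd : decide (τ.eval ∈ {g | g a = true ∧ g b = false}) with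
    | false =>
      have h := of_decide_eq_false hd
      simp only [Set.mem_setOf_eq] at h
      symm
      cases h1 : τ.eval a <;> cases h2 : τ.eval b <;> simp_all
    | true =>
      have h := of_decide_eq_true hd
      simp only [Set.mem_setOf_eq] at h
      symm
      simp [h.1, h.2]
  rw [hPr]
  have hlen0 : (0:ℝ) < (len k t : ℝ) := by exact_mod_cast hpos
  have hσ0 : (0:ℝ) < (σ:ℝ) := by exact_mod_cast (show 0 < σ by omega)
  rw [div_le_div_iff₀ hlen0 hσ0]
  have hσsat : (σ:ℝ) ≤ (t.satLevel : ℝ) := by exact_mod_cast hsat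
  have hc0 : (0:ℝ) ≤ (cnt k (fun τ => τ.eval a && !τ.eval b) t : ℝ) := Nat.cast_nonneg _
  have h1 : (cnt k (fun τ => τ.eval a && !τ.eval b) t : ℝ) * (σ:ℝ)
      ≤ (cnt k (fun τ => τ.eval a && !τ.eval b) t : ℝ) * ((t.satLevel:ℝ)+2) :=
    mul_le_mul_of_nonneg_left (by linarith) hc0
  linarith [hbound, hlen0]
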